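/- arXiv:2205.13903 — 10 statements merged into one kernel-verified Lean document; each statement's English description precedes it below -/
import Mathlib

section
/- Let (A, ≺) be a proto-subordination algebra satisfying (WO): b ≺ x ≤ y implies b ≺ y, and (DD): a ≺ x₁ and a ≺ x₂ imply there exists x with a ≺ x, x ≤ x₁, x ≤ x₂. Then for all a, b ∈ A, Diamond a ≤ b if and only if a ≺ b, where Diamond a := ⋀ ≺[a] in the canonical extension A^δ. -/
/-- Under (WO) and (DD), `Diamond a ≤ e b` iff `a ≺ b`. -/
theorem stmt_1 {A D : Type*} [PartialOrder A] [CompleteLattice D]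
    (e : A → D) (he : ∀ a b : A, e a ≤ e b ↔ a ≤ b)
    (compact : ∀ F I : Set A, DirectedOn (· ≥ ·) F → DirectedOn (· ≤ ·) I →
      sInf (e '' F) ≤ sSup (e '' I) → ∃ a ∈ F, ∃ b ∈ I, a ≤ b)
    (r : A → A → Prop)
    (WO : ∀ b x y : A, r b x → x ≤ y → r b y)
    (DD : ∀ a x₁ x₂ : A, r a x₁ → r a x₂ → ∃ x, r a x ∧ x ≤ x₁ ∧ x ≤ x₂) :
    ∀ a b : A, sInf (e '' {x | r a x}) ≤ e b ↔ r a b := by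
  intro a b
  constructor
  · intro h
    have hF : DirectedOn (· ≥ ·) {x | r a x} := by
      intro x hx y hy
      obtain ⟨z, hz, h1, h2⟩ := DD a x y hx hy
      exact ⟨z, hz, h1, h2⟩
    have hI : DirectedOn (· ≤ ·) ({b} : Set A) := directedOn_singleton b
    have hle : sInf (e '' {x | r a x}) ≤ sSup (e '' ({b} : Set A)) := by
      simpa using h
    obtain ⟨x, hx, y, hy, hxy⟩ := compact _ _ hF hI hle
    rw [Set.mem_singleton_iff] at hy
    exact WO a x b hx (hy ▸ hxy)
  · intro h
    exact sInf_le ⟨b, h, rfl⟩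
end

section
/- Let (A, ≺) be a proto-subordination algebra satisfying (SI): a ≤ b ≺ x implies a ≺ x, and (UD): a₁ ≺ x and a₂ ≺ x imply there exists a with a ≺ x, a₁ ≤ a, a₂ ≤ a. Then for all a, b ∈ A, a ≤ Box b iff a ≺ b, where Box b := ⋁ ≺⁻¹[b] in the canonical extension A^δ. -/
/-- Under (SI) and (UD), `e a ≤ Box b` iff `a ≺ b`, where `Box b := ⨆ ≺⁻¹[b]`. -/
theorem stmt_2 {A D : Type*} [PartialOrder A] [CompleteLattice D]
    (e : A → D) (he : ∀ a b : A, e a ≤ e b ↔ a ≤ b)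
    (compact : ∀ F I : Set A, DirectedOn (· ≥ ·) F → DirectedOn (· ≤ ·) I →
      sInf (e '' F) ≤ sSup (e '' I) → ∃ a ∈ F, ∃ b ∈ I, a ≤ b)
    (r : A → A → Prop)
    (SI : ∀ a b x : A, a ≤ b → r b x → r a x)
    (UD : ∀ a₁ a₂ x : A, r a₁ x → r a₂ x → ∃ a, r a x ∧ a₁ ≤ a ∧ a₂ ≤ a) :
    ∀ a b : A, e a ≤ sSup (e '' {x | r x b}) ↔ r a b := by
  intro a b
  constructor
  · intro h
    obtain ⟨a', ha', c, hc, hac⟩ := compact {a} {x | r x b}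
      (by simp [DirectedOn])
      (fun x hx y hy => by obtain ⟨z, hz, h1, h2⟩ := UD x y b hx hy; exact ⟨z, hz, h1, h2⟩)
      (by simpa using h)
    rw [Set.mem_singleton_iff] at ha'; subst ha'
    exact SI _ c b hac hc
  · intro h
    exact le_sSup ⟨a, h, rfl⟩
end

section
/- Let (A, ≺) be a proto-subordination algebra satisfying (WO) and (DD). Then Diamond is monotone (a ≤ b implies Diamond a ≤ Diamond b) if and only if ≺ satisfies (SI): a ≤ b ≺ x implies a ≺ x. -/
/-- Under (WO) and (DD), `Diamond` is monotone iff (SI) holds. -/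
theorem stmt_6 {A D : Type*} [PartialOrder A] [CompleteLattice D]
    (e : A → D) (he : ∀ a b : A, e a ≤ e b ↔ a ≤ b)
    (compact : ∀ F I : Set A, DirectedOn (· ≥ ·) F → DirectedOn (· ≤ ·) I →
      sInf (e '' F) ≤ sSup (e '' I) → ∃ a ∈ F, ∃ b ∈ I, a ≤ b)
    (r : A → A → Prop)
    (WO : ∀ b x y : A, r b x → x ≤ y → r b y)
    (DD : ∀ a x₁ x₂ : A, r a x₁ → r a x₂ → ∃ x, r a x ∧ x ≤ x₁ ∧ x ≤ x₂) :
    (∀ a b : A, a ≤ b → sInf (e '' {x | r a x}) ≤ sInf (e '' {x | r b x})) ↔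
      (∀ a b x : A, a ≤ b → r b x → r a x) := by
  constructor
  · intro mono a b x hab hbx
    have h1 : sInf (e '' {x | r a x}) ≤ e x := by
      refine (mono a b hab).trans (sInf_le ?_)
      exact ⟨x, hbx, rfl⟩
    have hdir : DirectedOn (· ≥ ·) {x | r a x} := by
      intro x₁ h₁ x₂ h₂
      obtain ⟨y, hy, hy₁, hy₂⟩ := DD a x₁ x₂ h₁ h₂
      exact ⟨y, hy, hy₁, hy₂⟩
    have hI : DirectedOn (· ≤ ·) ({x} : Set A) := by
      exact fun y hy z hz => ⟨x, rfl, le_of_eq hy, le_of_eq hz⟩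
    have h2 : sInf (e '' {x | r a x}) ≤ sSup (e '' {x}) := by
      simpa using h1
    obtain ⟨c, hc, d, hd, hcd⟩ := compact _ _ hdir hI h2
    exact WO a c x hc (le_of_le_of_eq hcd hd)
  · intro SI a b hab
    apply sInf_le_sInf
    rintro _ ⟨y, hy, rfl⟩
    exact ⟨y, SI a b y hab hy, rfl⟩
end

section
/- Let (A, ≺) be a proto-subordination algebra satisfying (SI), (WO), and (DD), where Diamond a := ⋀ ≺[a] in the canonical extension A^δ and Diamond is extended to closed elements by Diamond k := ⋀{Diamond a | a ∈ A, k ≤ a}. Then Diamond a ≤ Diamond(Diamond a) holds for all a ∈ A (with the nested Diamond applied to the closed element Diamond a) if and only if ≺ satisfies (T): a ≺ b and b ≺ c imply a ≺ c. -/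
/-- Under (SI), (WO), (DD): `Diamond a ≤ Diamond (Diamond a)` for all `a`
(with the outer `Diamond` applied to the closed element `Diamond a` via
`Diamond k := ⨅ {Diamond b | b ∈ A, k ≤ e b}`) iff (T) holds. -/
theorem stmt_10 {A D : Type*} [PartialOrder A] [CompleteLattice D]
    (e : A → D) (he : ∀ a b : A, e a ≤ e b ↔ a ≤ b)
    (compact : ∀ F I : Set A, DirectedOn (· ≥ ·) F → DirectedOn (· ≤ ·) I →
      sInf (e '' F) ≤ sSup (e '' I) → ∃ a ∈ F, ∃ b ∈ I, a ≤ b)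
    (r : A → A → Prop)
    (SI : ∀ a b x : A, a ≤ b → r b x → r a x)
    (WO : ∀ b x y : A, r b x → x ≤ y → r b y)
    (DD : ∀ a x₁ x₂ : A, r a x₁ → r a x₂ → ∃ x, r a x ∧ x ≤ x₁ ∧ x ≤ x₂) :
    (∀ a : A, sInf (e '' {x | r a x}) ≤
        sInf {u : D | ∃ b : A, sInf (e '' {x | r a x}) ≤ e b ∧ u = sInf (e '' {x | r b x})}) ↔
      (∀ a b c : A, r a b → r b c → r a c) := by
  have key : ∀ a b : A, sInf (e '' {x | r a x}) ≤ e b ↔ r a b := by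
    intro a b
    constructor
    · intro h
      have hdir : DirectedOn (· ≥ ·) {x | r a x} := by
        intro x₁ hx₁ x₂ hx₂
        obtain ⟨x, hx, h1, h2⟩ := DD a x₁ x₂ hx₁ hx₂
        exact ⟨x, hx, h1, h2⟩
      have hI : DirectedOn (· ≤ ·) ({b} : Set A) := directedOn_singleton b
      have : sInf (e '' {x | r a x}) ≤ sSup (e '' ({b} : Set A)) := by
        simpa using h
      obtain ⟨x, hx, y, hy, hxy⟩ := compact _ _ hdir hI this
      exact WO a x b hx (Set.mem_singleton_iff.mp hy ▸ hxy)
    · intro h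
      exact sInf_le ⟨b, h, rfl⟩
  constructor
  · intro H a b c hab hbc
    have h1 : sInf (e '' {x | r a x}) ≤ sInf (e '' {x | r b x}) :=
      le_trans (H a) (sInf_le ⟨b, (key a b).2 hab, rfl⟩)
    exact (key a c).1 (le_trans h1 ((key b c).2 hbc))
  · intro T a
    apply le_sInf
    rintro u ⟨b, hb, rfl⟩
    have hab : r a b := (key a b).1 hb
    apply le_sInf
    rintro v ⟨x, hx, rfl⟩
    exact (key a x).2 (T a b x hab hx)
end

section
/- Let (A, ≺) be a proto-subordination algebra satisfying (SI), (WO), and (DD). Then Diamond(Diamond a) ≤ Diamond a holds for all a ∈ A if and only if ≺ satisfies the density condition (D): a ≺ c implies there exists b with a ≺ b and b ≺ c. Here Diamond a := ⋀ ≺[a] in A^δ and Diamond on closed elements k is defined by Diamond k := ⋀{Diamond b | b ∈ A, k ≤ b}. -/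
/-- Under (SI), (WO), (DD): `Diamond (Diamond a) ≤ Diamond a` for all `a` iff
the density condition (D) holds: `a ≺ c` implies `a ≺ b` and `b ≺ c` for some `b`. -/
theorem stmt_11 {A D : Type*} [PartialOrder A] [CompleteLattice D]
    (e : A → D) (he : ∀ a b : A, e a ≤ e b ↔ a ≤ b)
    (compact : ∀ F I : Set A, DirectedOn (· ≥ ·) F → DirectedOn (· ≤ ·) I →
      sInf (e '' F) ≤ sSup (e '' I) → ∃ a ∈ F, ∃ b ∈ I, a ≤ b)
    (r : A → A → Prop)
    (SI : ∀ a b x : A, a ≤ b → r b x → r a x)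
    (WO : ∀ b x y : A, r b x → x ≤ y → r b y)
    (DD : ∀ a x₁ x₂ : A, r a x₁ → r a x₂ → ∃ x, r a x ∧ x ≤ x₁ ∧ x ≤ x₂) :
    (∀ a : A, sInf {u : D | ∃ b : A, sInf (e '' {x | r a x}) ≤ e b ∧ u = sInf (e '' {x | r b x})}
        ≤ sInf (e '' {x | r a x})) ↔
      (∀ a c : A, r a c → ∃ b, r a b ∧ r b c) := by
  constructor
  · intro h a c hac
    have hFdir : DirectedOn (· ≥ ·) {x | r a x} := by
      intro x₁ h1 x₂ h2
      obtain ⟨x, hx, h1', h2'⟩ := DD a x₁ x₂ h1 h2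
      exact ⟨x, hx, h1', h2'⟩
    have hsing : ∀ z : A, DirectedOn (· ≤ ·) ({z} : Set A) := by
      intro z x hx y hy
      exact ⟨z, rfl, le_of_eq hx, le_of_eq hy⟩
    have hDia : ∀ b : A, sInf (e '' {x | r a x}) ≤ e b → r a b := by
      intro b hb
      have hb' : sInf (e '' {x | r a x}) ≤ sSup (e '' {b}) := by
        simpa using hb
      obtain ⟨x, hx, y, hy, hxy⟩ := compact _ _ hFdir (hsing b) hb'
      rcases hy with rfl
      exact WO a x y hx hxy
    set S : Set A := {x | ∃ b, r a b ∧ r b x} with hS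
    have hSdir : DirectedOn (· ≥ ·) S := by
      rintro x₁ ⟨b₁, hab₁, hb₁⟩ x₂ ⟨b₂, hab₂, hb₂⟩
      obtain ⟨b, hab, hbb₁, hbb₂⟩ := DD a b₁ b₂ hab₁ hab₂
      obtain ⟨x, hbx, hx₁, hx₂⟩ :=
        DD b x₁ x₂ (SI b b₁ x₁ hbb₁ hb₁) (SI b b₂ x₂ hbb₂ hb₂)
      exact ⟨x, ⟨b, hab, hbx⟩, hx₁, hx₂⟩
    have key : sInf (e '' S) ≤ e c := by
      calc sInf (e '' S)
          ≤ sInf {u : D | ∃ b : A, sInf (e '' {x | r a x}) ≤ e b ∧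
              u = sInf (e '' {x | r b x})} := by
            apply le_sInf
            rintro u ⟨b, hb, rfl⟩
            apply le_sInf
            rintro d ⟨x, hx, rfl⟩
            exact sInf_le ⟨x, ⟨b, hDia b hb, hx⟩, rfl⟩
        _ ≤ sInf (e '' {x | r a x}) := h a
        _ ≤ e c := sInf_le ⟨c, hac, rfl⟩
    have key' : sInf (e '' S) ≤ sSup (e '' {c}) := by simpa using key
    obtain ⟨x, ⟨b, hab, hbx⟩, y, hy, hxy⟩ := compact _ _ hSdir (hsing c) key'
    rcases hy with rfl
    exact ⟨b, hab, WO b x y hbx hxy⟩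
  · intro hd a
    apply le_sInf
    rintro d ⟨x, hx, rfl⟩
    obtain ⟨b, hab, hbx⟩ := hd a x hx
    have h1 : sInf (e '' {x | r a x}) ≤ e b := sInf_le ⟨b, hab, rfl⟩
    have h2 : sInf (e '' {y | r b y}) ≤ e x := sInf_le ⟨x, hbx, rfl⟩
    exact le_trans (sInf_le ⟨_, h1, rfl⟩) h2
end

section
/- Let (A, ≺) be a proto-subordination algebra satisfying (SI), (WO), and (DD), and let k ∈ K(A^δ) with k = ⋀D for a down-directed D ⊆ A, where Diamond k := ⋀{Diamond a | a ∈ A, k ≤ a}. Then Diamond k = ⋀ ≺[D] where ≺[D] = {c | ∃a ∈ D, a ≺ c}; in particular Diamond k is a closed element of A^δ. Moreover, if b ∈ A and Diamond k ≤ b, then there exists a ∈ A with k ≤ a and a ≺ b. -/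
private lemma dirSingle {A : Type*} [Preorder A] (a : A) :
    DirectedOn (· ≤ ·) ({a} : Set A) := by
  rintro x hx y hy
  simp only [Set.mem_singleton_iff] at hx hy
  subst hx; subst hy
  exact ⟨_, rfl, le_refl _, le_refl _⟩

/-- Under (SI), (WO), (DD): for `k = ⨅ S` with `S ⊆ A` down-directed,
`Diamond k = ⨅ ≺[S]`, `Diamond k` is closed, and `Diamond k ≤ e b` implies
`a ≺ b` for some `a` with `k ≤ e a`. -/
theorem stmt_13 {A D : Type*} [PartialOrder A] [CompleteLattice D]
    (e : A → D) (he : ∀ a b : A, e a ≤ e b ↔ a ≤ b)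
    (compact : ∀ F I : Set A, DirectedOn (· ≥ ·) F → DirectedOn (· ≤ ·) I →
      sInf (e '' F) ≤ sSup (e '' I) → ∃ a ∈ F, ∃ b ∈ I, a ≤ b)
    (r : A → A → Prop)
    (SI : ∀ a b x : A, a ≤ b → r b x → r a x)
    (WO : ∀ b x y : A, r b x → x ≤ y → r b y)
    (DD : ∀ a x₁ x₂ : A, r a x₁ → r a x₂ → ∃ x, r a x ∧ x ≤ x₁ ∧ x ≤ x₂)
    (S : Set A) (hS : DirectedOn (· ≥ ·) S) :
    (sInf {u : D | ∃ a : A, sInf (e '' S) ≤ e a ∧ u = sInf (e '' {x | r a x})}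
        = sInf (e '' {c : A | ∃ a ∈ S, r a c})) ∧
    (∃ F : Set A, DirectedOn (· ≥ ·) F ∧
      sInf {u : D | ∃ a : A, sInf (e '' S) ≤ e a ∧ u = sInf (e '' {x | r a x})}
        = sInf (e '' F)) ∧
    (∀ b : A,
      sInf {u : D | ∃ a : A, sInf (e '' S) ≤ e a ∧ u = sInf (e '' {x | r a x})} ≤ e b →
      ∃ a : A, sInf (e '' S) ≤ e a ∧ r a b) := by
  set rS : Set A := {c : A | ∃ a ∈ S, r a c} with hrS
  -- directedness of rS
  have hdir : DirectedOn (· ≥ ·) rS := by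
    rintro c₁ ⟨a₁, ha₁, hr₁⟩ c₂ ⟨a₂, ha₂, hr₂⟩
    obtain ⟨a, ha, hle₁, hle₂⟩ := hS a₁ ha₁ a₂ ha₂
    have h1 : r a c₁ := SI a a₁ c₁ hle₁ hr₁
    have h2 : r a c₂ := SI a a₂ c₂ hle₂ hr₂
    obtain ⟨x, hx, hx1, hx2⟩ := DD a c₁ c₂ h1 h2
    exact ⟨x, ⟨a, ha, hx⟩, hx1, hx2⟩
  have heq : sInf {u : D | ∃ a : A, sInf (e '' S) ≤ e a ∧ u = sInf (e '' {x | r a x})}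
      = sInf (e '' rS) := by
    apply le_antisymm
    · apply le_sInf
      rintro d ⟨c, ⟨a, ha, hrac⟩, rfl⟩
      refine le_trans (sInf_le ⟨a, sInf_le ⟨a, ha, rfl⟩, rfl⟩) ?_
      exact sInf_le ⟨c, hrac, rfl⟩
    · apply le_sInf
      rintro u ⟨a, hka, rfl⟩
      apply le_sInf
      rintro d ⟨x, hrax, rfl⟩
      -- compactness: sInf (e '' S) ≤ e a
      have hcomp : sInf (e '' S) ≤ sSup (e '' {a}) := by
        simpa using hka
      obtain ⟨s, hs, a', ha', hsa⟩ := compact S {a} hS (dirSingle _) hcomp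
      have hsa2 : s ≤ a := hsa.trans (le_of_eq (Set.mem_singleton_iff.mp ha'))
      have : r s x := SI s a x hsa2 hrax
      exact sInf_le ⟨x, ⟨s, hs, this⟩, rfl⟩
  refine ⟨heq, ⟨rS, hdir, heq⟩, ?_⟩
  intro b hb
  rw [heq] at hb
  have hcomp : sInf (e '' rS) ≤ sSup (e '' {b}) := by simpa using hb
  obtain ⟨c, ⟨a, ha, hrac⟩, b', hb', hcb⟩ :=
    compact rS {b} hdir (dirSingle _) hcomp
  have hcb2 : c ≤ b := hcb.trans (le_of_eq (Set.mem_singleton_iff.mp hb'))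
  exact ⟨a, sInf_le ⟨a, ha, rfl⟩, WO a c b hrac hcb2⟩
end

section
/- Let (A, ≺) be a proto-subordination algebra where A is a distributive lattice, satisfying (WO): b ≺ x ≤ y implies b ≺ y, and (OR): a ≺ x and b ≺ x imply a ∨ b ≺ x. Then Diamond(a ∨ b) ≤ Diamond a ∨ Diamond b holds in the canonical extension A^δ, where Diamond c := ⋀ ≺[c] and A^δ is completely distributive. -/
/-- For a distributive-lattice-based proto-subordination algebra satisfying (WO) and (OR),
`Diamond (a ⊔ b) ≤ Diamond a ⊔ Diamond b` in the (completely distributive) canonical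
extension. -/
theorem stmt_14 {A D : Type*} [DistribLattice A] [CompleteLattice D]
    (e : A → D) (he : ∀ a b : A, e a ≤ e b ↔ a ≤ b)
    (hjoin : ∀ a b : A, e (a ⊔ b) = e a ⊔ e b)
    (hdist : ∀ S T : Set D, sInf S ⊔ sInf T = sInf {x | ∃ s ∈ S, ∃ t ∈ T, x = s ⊔ t})
    (r : A → A → Prop)
    (WO : ∀ b x y : A, r b x → x ≤ y → r b y)
    (OR : ∀ a b x : A, r a x → r b x → r (a ⊔ b) x) :
    ∀ a b : A,
      sInf (e '' {x | r (a ⊔ b) x}) ≤ sInf (e '' {x | r a x}) ⊔ sInf (e '' {x | r b x}) := by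
  intro a b
  rw [hdist]
  apply le_sInf
  rintro z ⟨s, ⟨x, hx, rfl⟩, t, ⟨y, hy, rfl⟩, rfl⟩
  have hr : r (a ⊔ b) (x ⊔ y) :=
    OR a b _ (WO a x _ hx le_sup_left) (WO b y _ hy le_sup_right)
  calc sInf (e '' {x | r (a ⊔ b) x}) ≤ e (x ⊔ y) := sInf_le ⟨_, hr, rfl⟩
    _ = e x ⊔ e y := hjoin x y
end

section
/- Let (A, ≺) be a proto-subordination algebra satisfying (SI), (WO), (DD), and (UD), based on a poset A equipped with an antitone involutive negation ¬ that is self-adjoint (¬a ≤ b ⟺ ¬b ≤ a). Then ≺ satisfies (S6): a ≺ b implies ¬b ≺ ¬a, if and only if ¬b ≺ ¬a holds for all a, b ∈ A with a ≺ b, which is in turn equivalent to: Box b = ¬ Diamond ¬b for all b ∈ A, where Diamond a := ⋀{x | a ≺ x} and Box b := ⋁{x | x ≺ b} in A^δ and ¬ is extended to A^δ as an antitone involution. -/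
/-- For a directed proto-subordination algebra (satisfying (SI), (WO), (DD), (UD)) based
on a poset with an antitone, involutive, self-adjoint negation, condition (S6)
(`a ≺ b → ¬b ≺ ¬a`) is (trivially) equivalent to `¬b ≺ ¬a` for all `a ≺ b`, which is
in turn equivalent to `Box b = ¬ Diamond ¬b` for all `b`, where the negation is extended
to the canonical extension as an antitone involution. -/
theorem stmt_16 {A D : Type*} [PartialOrder A] [CompleteLattice D]
    (e : A → D) (he : ∀ a b : A, e a ≤ e b ↔ a ≤ b)
    (compact : ∀ F I : Set A, DirectedOn (· ≥ ·) F → DirectedOn (· ≤ ·) I →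
      sInf (e '' F) ≤ sSup (e '' I) → ∃ a ∈ F, ∃ b ∈ I, a ≤ b)
    (r : A → A → Prop)
    (SI : ∀ a b x : A, a ≤ b → r b x → r a x)
    (WO : ∀ b x y : A, r b x → x ≤ y → r b y)
    (DD : ∀ a x₁ x₂ : A, r a x₁ → r a x₂ → ∃ x, r a x ∧ x ≤ x₁ ∧ x ≤ x₂)
    (UD : ∀ a₁ a₂ x : A, r a₁ x → r a₂ x → ∃ a, r a x ∧ a₁ ≤ a ∧ a₂ ≤ a)
    (neg : A → A)
    (hanti : ∀ a b : A, a ≤ b → neg b ≤ neg a)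
    (hinv : ∀ a : A, neg (neg a) = a)
    (hadj : ∀ a b : A, neg a ≤ b ↔ neg b ≤ a)
    (negD : D → D)
    (hnegE : ∀ a : A, negD (e a) = e (neg a))
    (hnegInf : ∀ S : Set D, negD (sInf S) = sSup (negD '' S))
    (hnegSup : ∀ S : Set D, negD (sSup S) = sInf (negD '' S))
    (hnegInv : ∀ u : D, negD (negD u) = u) :
    ((∀ a b : A, r a b → r (neg b) (neg a)) ↔ (∀ a b : A, r a b → r (neg b) (neg a))) ∧
    ((∀ a b : A, r a b → r (neg b) (neg a)) ↔
      (∀ b : A, sSup (e '' {x | r x b}) = negD (sInf (e '' {x | r (neg b) x})))) := by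
  refine ⟨Iff.rfl, ?_, ?_⟩
  · intro h6 b
    have hset : {x | r x b} = neg '' {x | r (neg b) x} := by
      ext x
      constructor
      · intro hx
        exact ⟨neg x, by simpa [hinv] using h6 x b hx, hinv x⟩
      · rintro ⟨y, hy, rfl⟩
        have := h6 (neg b) y hy
        rwa [hinv] at this
    rw [hset, hnegInf, ← Set.image_comp, ← Set.image_comp]
    congr 1
    ext x; simp [Function.comp, hnegE]
  · intro h a b hab
    have h1 : e a ≤ sSup (e '' {x | r x b}) := le_sSup ⟨a, hab, rfl⟩
    rw [h b, hnegInf, ← Set.image_comp] at h1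
    have himg : (negD ∘ e) '' {x | r (neg b) x} = e '' (neg '' {x | r (neg b) x}) := by
      rw [← Set.image_comp]; ext x; simp [Function.comp, hnegE]
    rw [himg] at h1
    have hdirF : DirectedOn (· ≥ ·) ({a} : Set A) :=
      @directedOn_singleton _ (· ≥ ·) ⟨fun x => le_refl x⟩ a
    have hdirI : DirectedOn (· ≤ ·) (neg '' {x | r (neg b) x}) := by
      rintro _ ⟨x₁, h₁, rfl⟩ _ ⟨x₂, h₂, rfl⟩
      obtain ⟨x, hx, hx1, hx2⟩ := DD _ _ _ h₁ h₂
      exact ⟨neg x, ⟨x, hx, rfl⟩, hanti _ _ hx1, hanti _ _ hx2⟩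
    have h2 : sInf (e '' ({a} : Set A)) ≤ sSup (e '' (neg '' {x | r (neg b) x})) := by
      simpa using h1
    obtain ⟨a', ha', y, hy, hle⟩ := compact _ _ hdirF hdirI h2
    obtain ⟨x, hx, rfl⟩ := hy
    rw [Set.mem_singleton_iff] at ha'
    rw [ha'] at hle
    have hxa : x ≤ neg a := by
      have := hanti _ _ hle
      rwa [hinv] at this
    exact WO _ _ _ hx hxa
end

section
/- Let (A, ≺) be a subordination lattice: A a bounded distributive lattice and ≺ satisfying (SI), (WO), (AND), (OR), (⊥): ⊥ ≺ ⊥, and (⊤): ⊤ ≺ ⊤. For prime filters P, Q of A, the following are equivalent: (1) ≺[P] := {x | ∃a ∈ P, a ≺ x} ⊆ Q; (2) ⋀Q ≤ ⋀≺[P] in the canonical extension A^δ. -/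
/-- A prime filter of a bounded lattice. -/
def IsPrimeFilter {A : Type*} [Lattice A] (P : Set A) : Prop :=
  P.Nonempty ∧ (∀ a b : A, a ∈ P → a ≤ b → b ∈ P) ∧
  (∀ a b : A, a ∈ P → b ∈ P → a ⊓ b ∈ P) ∧ P ≠ Set.univ ∧
  (∀ a b : A, a ⊔ b ∈ P → a ∈ P ∨ b ∈ P)

/-- For a subordination lattice and prime filters `P`, `Q`:
`≺[P] ⊆ Q` iff `⨅ Q ≤ ⨅ ≺[P]` in the canonical extension. -/
theorem stmt_17 {A D : Type*} [DistribLattice A] [BoundedOrder A] [CompleteLattice D]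
    (e : A → D) (he : ∀ a b : A, e a ≤ e b ↔ a ≤ b)
    (compact : ∀ F I : Set A, DirectedOn (· ≥ ·) F → DirectedOn (· ≤ ·) I →
      sInf (e '' F) ≤ sSup (e '' I) → ∃ a ∈ F, ∃ b ∈ I, a ≤ b)
    (r : A → A → Prop)
    (SI : ∀ a b x : A, a ≤ b → r b x → r a x)
    (WO : ∀ b x y : A, r b x → x ≤ y → r b y)
    (AND : ∀ a x y : A, r a x → r a y → r a (x ⊓ y))
    (OR : ∀ a b x : A, r a x → r b x → r (a ⊔ b) x)
    (hbot : r ⊥ ⊥) (htop : r ⊤ ⊤)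
    (P Q : Set A) (hP : IsPrimeFilter P) (hQ : IsPrimeFilter Q) :
    {x : A | ∃ a ∈ P, r a x} ⊆ Q ↔
      sInf (e '' Q) ≤ sInf (e '' {x : A | ∃ a ∈ P, r a x}) := by
  obtain ⟨hQne, hQup, hQinf, hQprop, hQprime⟩ := hQ
  constructor
  · intro hsub
    exact sInf_le_sInf (Set.image_mono hsub)
  · intro h x hx
    have hdir : DirectedOn (· ≥ ·) Q := by
      intro a ha b hb
      exact ⟨a ⊓ b, hQinf a b ha hb, inf_le_left, inf_le_right⟩
    have hI : DirectedOn (· ≤ ·) ({x} : Set A) := by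
      intro a ha b hb
      exact ⟨x, rfl, by simp_all, by simp_all⟩
    have hle : sInf (e '' Q) ≤ sSup (e '' ({x} : Set A)) := by
      have : sInf (e '' {x : A | ∃ a ∈ P, r a x}) ≤ e x :=
        sInf_le (Set.mem_image_of_mem e hx)
      simpa using h.trans this
    obtain ⟨a, ha, b, hb, hab⟩ := compact Q {x} hdir hI hle
    rcases hb with rfl
    exact hQup a b ha hab
end

section
/- Let (A, ≺) be a proto-subordination algebra (A a poset) satisfying (SI), (WO), (DD), and (UD), and suppose f, f' : A → A^δ take values in closed elements of A^δ with f(a) ≤ f'(a) for all a ∈ A and f(b) < f'(b) for some b ∈ A. Define ≺_f by a ≺_f c iff f(a) ≤ c, and similarly ≺_{f'}. Then ≺_{f'} ⊊ ≺_f (strict inclusion). -/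
/-- If `f, f' : A → A^δ` take closed values, `f ≤ f'` pointwise and `f b < f' b` for
some `b`, then the induced proto-subordination relation of `f'` is strictly contained
in that of `f`. -/
theorem stmt_19 {A D : Type*} [PartialOrder A] [CompleteLattice D]
    (e : A → D) (he : ∀ a b : A, e a ≤ e b ↔ a ≤ b)
    (compact : ∀ F I : Set A, DirectedOn (· ≥ ·) F → DirectedOn (· ≤ ·) I →
      sInf (e '' F) ≤ sSup (e '' I) → ∃ a ∈ F, ∃ b ∈ I, a ≤ b)
    (dense : ∀ u : D,
      u = sInf {o | (∃ I : Set A, DirectedOn (· ≤ ·) I ∧ o = sSup (e '' I)) ∧ u ≤ o})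
    (r : A → A → Prop)
    (SI : ∀ a b x : A, a ≤ b → r b x → r a x)
    (WO : ∀ b x y : A, r b x → x ≤ y → r b y)
    (DD : ∀ a x₁ x₂ : A, r a x₁ → r a x₂ → ∃ x, r a x ∧ x ≤ x₁ ∧ x ≤ x₂)
    (UD : ∀ a₁ a₂ x : A, r a₁ x → r a₂ x → ∃ a, r a x ∧ a₁ ≤ a ∧ a₂ ≤ a)
    (f f' : A → D)
    (hf : ∀ a : A, ∃ F : Set A, DirectedOn (· ≥ ·) F ∧ f a = sInf (e '' F))
    (hf' : ∀ a : A, ∃ F : Set A, DirectedOn (· ≥ ·) F ∧ f' a = sInf (e '' F))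
    (hle : ∀ a : A, f a ≤ f' a) (b : A) (hlt : f b < f' b) :
    {p : A × A | f' p.1 ≤ e p.2} ⊂ {p : A × A | f p.1 ≤ e p.2} := by
  constructor
  · intro p hp
    exact le_trans (hle p.1) hp
  · intro hsub
    -- Claim: f' b ≤ every open above f b, hence f' b ≤ f b, contradiction.
    have key : f' b ≤ sInf {o | (∃ I : Set A, DirectedOn (· ≤ ·) I ∧ o = sSup (e '' I)) ∧ f b ≤ o} := by
      apply le_sInf
      rintro o ⟨⟨I, hI, rfl⟩, hbo⟩
      obtain ⟨F, hF, hFeq⟩ := hf b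
      obtain ⟨a, haF, c, hcI, hac⟩ := compact F I hF hI (hFeq ▸ hbo)
      have h1 : f b ≤ e c := by
        calc f b = sInf (e '' F) := hFeq
        _ ≤ e a := sInf_le ⟨a, haF, rfl⟩
        _ ≤ e c := (he a c).2 hac
      have h2 : f' b ≤ e c := hsub (show (b, c) ∈ _ from h1)
      exact h2.trans (le_sSup ⟨c, hcI, rfl⟩)
    rw [← dense (f b)] at key
    exact absurd key (not_le_of_gt hlt)
end
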